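/- Let G be a finite group, S a Sylow 2-subgroup of G, and x ∈ N_G(S) an element of odd order. Assume there exist normal subgroups G₁, …, G_k of G such that (G₁ ∩ … ∩ G_k) ∩ S ≤ Z(N_G(S)), and assume that for each i the image of x in G/G_i commutes with every element of the image of S in G/G_i. Then x centralizes S, i.e. x commutes with every element of S. -/

import Mathlib

/-- An odd-order element of `N_G(S)` centralizing `S` modulo each of a family of
normal subgroups whose common intersection with `S` is central in `N_G(S)`,
centralizes `S`. -/
theorem centralizes_sylow_of_centralizes_quotients {G : Type*} [Group G] [Finite G]
    (S : Sylow 2 G) (x : G) (hx : x ∈ Subgroup.normalizer ((S : Subgroup G) : Set G))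
    (hodd : Odd (orderOf x))
    (k : ℕ) (Gs : Fin k → Subgroup G) [∀ i, (Gs i).Normal]
    (hcent : ∀ y ∈ (⨅ i, Gs i) ⊓ (S : Subgroup G),
      ∀ n ∈ Subgroup.normalizer ((S : Subgroup G) : Set G), y * n = n * y)
    (hquot : ∀ i, ∀ s ∈ (S : Subgroup G),
      QuotientGroup.mk' (Gs i) x * QuotientGroup.mk' (Gs i) s =
        QuotientGroup.mk' (Gs i) s * QuotientGroup.mk' (Gs i) x) :
    ∀ s ∈ (S : Subgroup G), x * s = s * x := by
  intro s hs
  set c := x * s * x⁻¹ * s⁻¹ with hc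
  have hxs : x * s * x⁻¹ ∈ (S : Subgroup G) := (Subgroup.mem_normalizer_iff.mp hx s).mp hs
  have hcS : c ∈ (S : Subgroup G) := mul_mem hxs (inv_mem hs)
  have hcGi : ∀ i, c ∈ Gs i := by
    intro i
    have h := hquot i s⁻¹ (inv_mem hs)
    simp only [← map_mul] at h
    have h2 : (x * s⁻¹)⁻¹ * (s⁻¹ * x) ∈ Gs i := QuotientGroup.eq.mp h
    have h3 := (inferInstance : (Gs i).Normal).conj_mem _ h2 x
    have : x * ((x * s⁻¹)⁻¹ * (s⁻¹ * x)) * x⁻¹ = c := by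
      rw [hc]; group
    rwa [this] at h3
  have hcZ : c ∈ (⨅ i, Gs i) ⊓ (S : Subgroup G) :=
    Subgroup.mem_inf.mpr ⟨Subgroup.mem_iInf.mpr hcGi, hcS⟩
  have hcx : Commute x c := (hcent c hcZ x hx).symm
  have hcs : c * s = s * c := hcent c hcZ s (Subgroup.le_normalizer hs)
  have key : ∀ n : ℕ, x ^ n * s * (x ^ n)⁻¹ = c ^ n * s := by
    intro n
    induction n with
    | zero => simp
    | succ n ih =>
      have h1 : x ^ (n + 1) * s * (x ^ (n + 1))⁻¹
          = x * (x ^ n * s * (x ^ n)⁻¹) * x⁻¹ := by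
        rw [pow_succ']; group
      have h2 : x * s * x⁻¹ = c * s := by rw [hc]; group
      rw [h1, ih]
      have h3 : x * (c ^ n * s) * x⁻¹ = c ^ n * (x * s * x⁻¹) := by
        rw [← mul_assoc, (hcx.pow_right n).eq]; simp [mul_assoc]
      rw [h3, h2, pow_succ, ← mul_assoc]
  have hcn : c ^ orderOf x = 1 := by
    have := key (orderOf x)
    rw [pow_orderOf_eq_one, one_mul, inv_one, mul_one] at this
    have := this.symm
    exact mul_right_cancel (by rw [this, one_mul])
  have hdvd1 : orderOf c ∣ orderOf x := orderOf_dvd_of_pow_eq_one hcn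
  obtain ⟨m, hm⟩ := S.isPGroup' ⟨c, hcS⟩
  have hm' : c ^ (2 ^ m) = 1 := by
    have := congrArg (Subtype.val) hm
    simpa using this
  have hdvd2 : orderOf c ∣ 2 ^ m := orderOf_dvd_of_pow_eq_one hm'
  have hcop : Nat.Coprime (2 ^ m) (orderOf x) :=
    Nat.Coprime.pow_left m (Nat.coprime_two_left.mpr hodd)
  have hc1 : c = 1 := by
    have : orderOf c ∣ Nat.gcd (2 ^ m) (orderOf x) := Nat.dvd_gcd hdvd2 hdvd1
    rw [hcop] at this
    exact orderOf_eq_one_iff.mp (Nat.dvd_one.mp this)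
  have : x * s * x⁻¹ * s⁻¹ = 1 := hc1
  calc x * s = (x * s * x⁻¹ * s⁻¹) * (s * x) := by group
    _ = s * x := by rw [this, one_mul]
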